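/- (Charging claim underlying the L-increasing Corollary) Let L > 1 be a real number and let an MLAPD instance be given whose tree is L-increasing, i.e. c(v) ≥ L·c(par v) for every node v ≠ r. Let OPT be any feasible schedule. Let ρ_1, …, ρ_m be requests with d(ρ_1) < d(ρ_2) < … < d(ρ_m) such that for each i, the request ρ_i is not satisfied by any of the services (P(v(ρ_1)), d(ρ_1)), …, (P(v(ρ_{i−1})), d(ρ_{i−1})). Then Σ_{i=1}^m Σ_{u ∈ P(v(ρ_i))} c(u) ≤ (L/(L−1)) · cost(OPT). -/

import Mathlib

open Classical

variable {V : Type} [Fintype V] [DecidableEq V] {Req : Type} [Fintype Req]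

/-- The root path of `v`: the set of nodes of the form `par^[n] v`, i.e. `v` and its ancestors. -/
noncomputable def rootPath (par : V → V) (v : V) : Finset V :=
  Finset.univ.filter (fun u => ∃ n : ℕ, par^[n] v = u)

/-- The level of a node: the cardinality of its root path (the root has level 1). -/
noncomputable def level (par : V → V) (v : V) : ℕ :=
  (rootPath par v).card

/-- The depth `D` of the instance: the maximum level over all nodes. -/
noncomputable def depth (par : V → V) : ℕ :=
  Finset.univ.sup (level par)

/-- A valid service tree: contains the root and is closed under the parent map. -/
def IsServiceTree (r : V) (par : V → V) (S : Finset V) : Prop :=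
  r ∈ S ∧ ∀ u ∈ S, par u ∈ S

/-- A service `(S, t)` satisfies a request `ρ` if the node of `ρ` lies in `S`
and `t` lies in the time window `[arr ρ, dl ρ]`. -/
def SatisfiedBy (node : Req → V) (arr dl : Req → ℝ) (S : Finset V) (t : ℝ) (ρ : Req) : Prop :=
  node ρ ∈ S ∧ arr ρ ≤ t ∧ t ≤ dl ρ

/-- The cost of a service subtree. -/
noncomputable def serviceCost (c : V → ℝ) (S : Finset V) : ℝ :=
  ∑ u ∈ S, c u

/-- The cost of a schedule: the sum of the costs of its services. -/
noncomputable def scheduleCost (c : V → ℝ) (sched : List (Finset V × ℝ)) : ℝ :=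
  (sched.map fun s => serviceCost c s.1).sum

/-- A schedule is feasible if each of its members is a valid service and every
request is satisfied by some service of the schedule. -/
def Feasible (r : V) (par : V → V) (node : Req → V) (arr dl : Req → ℝ)
    (sched : List (Finset V × ℝ)) : Prop :=
  (∀ s ∈ sched, IsServiceTree r par s.1) ∧
  ∀ ρ : Req, ∃ s ∈ sched, SatisfiedBy node arr dl s.1 s.2 ρ


set_option linter.unusedSectionVars false

lemma mem_rootPath {par : V → V} {v u : V} :
    u ∈ rootPath par v ↔ ∃ n : ℕ, par^[n] v = u := by
  simp [rootPath]

lemma self_mem_rootPath (par : V → V) (v : V) : v ∈ rootPath par v :=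
  mem_rootPath.2 ⟨0, rfl⟩

lemma rootPath_root {par : V → V} {r : V} (hroot : par r = r) :
    rootPath par r = {r} := by
  ext u
  simp only [mem_rootPath, Finset.mem_singleton]
  constructor
  · rintro ⟨n, rfl⟩
    exact (Function.iterate_fixed hroot n)
  · rintro rfl; exact ⟨0, rfl⟩

lemma not_self_mem_rootPath_par {par : V → V} {r v : V} (hroot : par r = r)
    {N : ℕ} (hN : par^[N] v = r) (hv : v ≠ r) :
    v ∉ rootPath par (par v) := by
  rw [mem_rootPath]
  rintro ⟨n, hn⟩
  -- par^[n+1] v = v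
  have hcyc : par^[n+1] v = v := by
    rw [Function.iterate_succ_apply]; exact hn
  have h1 : par^[(n+1) * N] v = v := by
    rw [Function.iterate_mul]
    exact Function.iterate_fixed hcyc N
  have h2 : par^[(n+1) * N] v = r := by
    have : (n+1) * N = n * N + N := by ring
    rw [this, Function.iterate_add_apply, hN]
    exact Function.iterate_fixed hroot _
  exact hv (h1 ▸ h2)

lemma rootPath_eq_insert {par : V → V} {v : V} :
    rootPath par v = insert v (rootPath par (par v)) := by
  ext u
  simp only [mem_rootPath, Finset.mem_insert]
  constructor
  · rintro ⟨n, rfl⟩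
    cases n with
    | zero => left; rfl
    | succ k => right; exact ⟨k, by rw [← Function.iterate_succ_apply]⟩
  · rintro (rfl | ⟨k, rfl⟩)
    · exact ⟨0, rfl⟩
    · exact ⟨k + 1, by rw [Function.iterate_succ_apply]⟩

lemma rootPath_cost_le (r : V) (par : V → V) (c : V → ℝ)
    (hroot : par r = r) (hc : ∀ v, 0 < c v)
    (L : ℝ) (hL : 1 < L) (hLinc : ∀ v : V, v ≠ r → L * c (par v) ≤ c v) :
    ∀ (n : ℕ) (v : V), par^[n] v = r →
      ∑ u ∈ rootPath par v, c u ≤ (L / (L - 1)) * c v := by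
  have hL1 : (0:ℝ) < L - 1 := by linarith
  have hL0 : (0:ℝ) < L := by linarith
  intro n
  induction n with
  | zero =>
    intro v hv
    simp only [Function.iterate_zero, id] at hv
    subst hv
    rw [rootPath_root hroot, Finset.sum_singleton]
    have := hc v
    rw [div_mul_eq_mul_div, le_div_iff₀ hL1]
    nlinarith [hc v]
  | succ k ih =>
    intro v hv
    by_cases hvr : v = r
    · subst hvr
      rw [rootPath_root hroot, Finset.sum_singleton]
      have := hc v
      rw [div_mul_eq_mul_div, le_div_iff₀ hL1]
      nlinarith [hc v]
    · have hpar : par^[k] (par v) = r := by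
        rw [← Function.iterate_succ_apply]; exact hv
      have hIH := ih (par v) hpar
      have hnot := not_self_mem_rootPath_par hroot hv hvr
      rw [rootPath_eq_insert, Finset.sum_insert hnot]
      have hstep : c (par v) ≤ c v / L := by
        rw [le_div_iff₀ hL0, mul_comm]
        exact hLinc v hvr
      have : ∑ u ∈ rootPath par (par v), c u ≤ (L / (L - 1)) * (c v / L) := by
        refine hIH.trans ?_
        have : 0 ≤ L / (L - 1) := le_of_lt (div_pos hL0 hL1)
        exact mul_le_mul_of_nonneg_left hstep this
      have heq : c v + (L / (L - 1)) * (c v / L) = (L / (L - 1)) * c v := by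
        field_simp
        ring
      linarith

/-- **Charging claim underlying the L-increasing Corollary**: in an `L`-increasing tree
(`L > 1`), if requests `ρ 0, …, ρ (m-1)` have strictly increasing deadlines and each
`ρ i` is not satisfied by any of the services `(P(v(ρ j)), d(ρ j))` for `j < i`, then
the total cost of the root paths of their nodes is at most `L/(L-1)` times the cost of
any feasible schedule. -/
theorem charging_claim_L_increasing
    (r : V) (par : V → V) (c : V → ℝ) (node : Req → V) (arr dl : Req → ℝ)
    (hroot : par r = r) (hreach : ∀ v : V, ∃ n : ℕ, par^[n] v = r)
    (hc : ∀ v, 0 < c v) (harr : ∀ ρ, arr ρ ≤ dl ρ) (hdl : Function.Injective dl)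
    (L : ℝ) (hL : 1 < L) (hLinc : ∀ v : V, v ≠ r → L * c (par v) ≤ c v)
    (OPT : List (Finset V × ℝ)) (hOPT : Feasible r par node arr dl OPT)
    (m : ℕ) (ρ : Fin m → Req)
    (hmono : ∀ i j : Fin m, i < j → dl (ρ i) < dl (ρ j))
    (hunsat : ∀ i j : Fin m, j < i →
      ¬ SatisfiedBy node arr dl (rootPath par (node (ρ j))) (dl (ρ j)) (ρ i)) :
    ∑ i : Fin m, ∑ u ∈ rootPath par (node (ρ i)), c u ≤
      (L / (L - 1)) * scheduleCost c OPT := by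
  classical
  have hL1 : (0:ℝ) < L - 1 := by linarith
  have hL0 : (0:ℝ) < L := by linarith
  have hLnn : (0:ℝ) ≤ L / (L - 1) := le_of_lt (div_pos hL0 hL1)
  -- choose, for each i, an index of a service of OPT satisfying ρ i
  have hsat : ∀ i : Fin m, ∃ j : Fin OPT.length,
      SatisfiedBy node arr dl (OPT.get j).1 (OPT.get j).2 (ρ i) := by
    intro i
    obtain ⟨s, hs, hss⟩ := hOPT.2 (ρ i)
    obtain ⟨j, hj⟩ := List.get_of_mem hs
    exact ⟨j, by rw [hj]; exact hss⟩
  choose k hk using hsat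
  -- Step A: per-request root path cost bound
  have hA : ∀ i : Fin m, ∑ u ∈ rootPath par (node (ρ i)), c u ≤
      (L / (L - 1)) * c (node (ρ i)) := by
    intro i
    obtain ⟨n, hn⟩ := hreach (node (ρ i))
    exact rootPath_cost_le r par c hroot hc L hL hLinc n _ hn
  -- Step B: the charged node costs are bounded by the schedule cost
  have hsched : scheduleCost c OPT = ∑ j : Fin OPT.length, serviceCost c (OPT.get j).1 := by
    unfold scheduleCost
    rw [← List.ofFn_getElem_eq_map OPT (fun s => serviceCost c s.1), List.sum_ofFn]
    rfl
  have hB : ∑ i : Fin m, c (node (ρ i)) ≤ scheduleCost c OPT := by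
    rw [hsched, ← Finset.sum_fiberwise Finset.univ k (fun i => c (node (ρ i)))]
    apply Finset.sum_le_sum
    intro j _
    have hinj : ∀ x ∈ Finset.univ.filter (fun i => k i = j),
        ∀ y ∈ Finset.univ.filter (fun i => k i = j),
        node (ρ x) = node (ρ y) → x = y := by
      intro x hx y hy hxy
      simp only [Finset.mem_filter, Finset.mem_univ, true_and] at hx hy
      by_contra hne
      -- wlog y < x
      have key : ∀ a b : Fin m, k a = j → k b = j → node (ρ a) = node (ρ b) →
          b < a → False := by
        intro a b hka hkb hab hba
        refine hunsat a b hba ⟨?_, ?_, ?_⟩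
        · rw [hab]; exact self_mem_rootPath par (node (ρ b))
        · have h1 : arr (ρ a) ≤ (OPT.get j).2 := by
            have := (hk a).2.1; rw [hka] at this; exact this
          have h2 : (OPT.get j).2 ≤ dl (ρ b) := by
            have := (hk b).2.2; rw [hkb] at this; exact this
          linarith
        · exact le_of_lt (hmono b a hba)
      rcases lt_or_gt_of_ne hne with h | h
      · exact key y x hy hx hxy.symm h
      · exact key x y hx hy hxy h
    rw [← Finset.sum_image hinj]
    apply Finset.sum_le_sum_of_subset_of_nonneg
    · intro u hu
      simp only [Finset.mem_image, Finset.mem_filter, Finset.mem_univ, true_and] at hu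
      obtain ⟨i, hki, rfl⟩ := hu
      have := (hk i).1
      rw [hki] at this
      exact this
    · intro u _ _
      exact le_of_lt (hc u)
  calc ∑ i : Fin m, ∑ u ∈ rootPath par (node (ρ i)), c u
      ≤ ∑ i : Fin m, (L / (L - 1)) * c (node (ρ i)) := Finset.sum_le_sum fun i _ => hA i
    _ = (L / (L - 1)) * ∑ i : Fin m, c (node (ρ i)) := by rw [Finset.mul_sum]
    _ ≤ (L / (L - 1)) * scheduleCost c OPT := mul_le_mul_of_nonneg_left hB hLnn
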